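/- If two finite simple graphs G and H (with no isolated vertices) are EPWL-indistinguishable with respect to the normalized Laplacian L̂, then G and H are GD-WL-indistinguishable with respect to the resistance distance RD. (GD-WL with resistance distance is upper bounded in expressive power by EPWL with L̂.) -/

import Mathlib

open scoped Classical
open Matrix BigOperators

noncomputable section

namespace EPWL

/-! ### Generic node-coloring refinement with pairwise features in a type `α` -/

/-- The common nested type of round-`l` colors: `C 0 = Unit`,
`C (l+1) = C l × Multiset (C l × α)`. -/
def Color (α : Type) : ℕ → Type
  | 0 => Unit
  | l + 1 => Color α l × Multiset (Color α l × α)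

/-- The color refinement: `χ⁰(u) = ()` and
`χ^{l+1}(u) = (χ^l(u), {{(χ^l(v), f u v) : v}})`. -/
def colorFn {V : Type*} [Fintype V] {α : Type} (f : V → V → α) :
    (l : ℕ) → V → Color α l
  | 0 => fun _ => ()
  | l + 1 => fun u =>
      (colorFn f l u, Finset.univ.val.map fun v => (colorFn f l v, f u v))

/-- Two graphs (presented through their pairwise-feature functions) are
indistinguishable by the node-coloring refinement: at every round, the
multisets of node colors agree. -/
def NodeIndist {V W : Type*} [Fintype V] [Fintype W] {α : Type}
    (f : V → V → α) (g : W → W → α) : Prop :=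
  ∀ l : ℕ, Finset.univ.val.map (colorFn f l) = Finset.univ.val.map (colorFn g l)

/-- Atomic type of an ordered vertex pair: `0` if equal, `1` if adjacent,
`2` otherwise. -/
def atp {V : Type*} (G : SimpleGraph V) (u v : V) : ℕ :=
  if u = v then 0 else if G.Adj u v then 1 else 2

/-- 1-WL indistinguishability. -/
def WL1Indist {V W : Type*} [Fintype V] [Fintype W]
    (G : SimpleGraph V) (H : SimpleGraph W) : Prop :=
  NodeIndist (atp G) (atp H)

/-! ### Graph matrices -/

/-- Real adjacency matrix. -/
def adjM {V : Type*} [Fintype V] (G : SimpleGraph V) : Matrix V V ℝ :=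
  G.adjMatrix ℝ

/-- Real (diagonal) degree matrix. -/
def degM {V : Type*} [Fintype V] (G : SimpleGraph V) : Matrix V V ℝ :=
  Matrix.diagonal fun v => (G.degree v : ℝ)

/-- Laplacian matrix `L = D - A`. -/
def lapM {V : Type*} [Fintype V] (G : SimpleGraph V) : Matrix V V ℝ :=
  degM G - adjM G

/-- The diagonal matrix `D^{-1/2}`. -/
def invSqrtDegM {V : Type*} [Fintype V] (G : SimpleGraph V) : Matrix V V ℝ :=
  Matrix.diagonal fun v => (Real.sqrt (G.degree v))⁻¹

/-- Normalized Laplacian `L̂ = D^{-1/2} L D^{-1/2}`. -/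
def normLapM {V : Type*} [Fintype V] (G : SimpleGraph V) : Matrix V V ℝ :=
  invSqrtDegM G * lapM G * invSqrtDegM G

/-- Normalized adjacency matrix `Â = D^{-1/2} A D^{-1/2}`. -/
def normAdjM {V : Type*} [Fintype V] (G : SimpleGraph V) : Matrix V V ℝ :=
  invSqrtDegM G * adjM G * invSqrtDegM G

/-- The diagonal matrix `D⁻¹` of inverse degrees. -/
def invDegM {V : Type*} [Fintype V] (G : SimpleGraph V) : Matrix V V ℝ :=
  Matrix.diagonal fun v => ((G.degree v : ℝ))⁻¹

/-- The random-walk matrix `D⁻¹ A`. -/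
def rwM {V : Type*} [Fintype V] (G : SimpleGraph V) : Matrix V V ℝ :=
  invDegM G * adjM G

/-- The all-ones matrix `J`. -/
def allOnes (V : Type*) : Matrix V V ℝ := Matrix.of fun _ _ => 1

/-- A choice among the three graph matrices `A`, `L`, `L̂`. -/
inductive MatChoice | adj | lap | normLap

/-- The graph matrix associated with a choice. -/
def matOf {V : Type*} [Fintype V] (c : MatChoice) (G : SimpleGraph V) :
    Matrix V V ℝ :=
  match c with
  | .adj => adjM G
  | .lap => lapM G
  | .normLap => normLapM G

/-! ### Spectral decompositions and the eigenspace projection invariant -/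

/-- `IsSpectralDecomp M Λ P` says: `Λ` is the (finite) set of distinct
eigenvalues of the symmetric matrix `M` and, for `lam ∈ Λ`, `P lam` is the
orthogonal projection onto the eigenspace of `lam`. This is characterized
uniquely by: the `P lam` are symmetric idempotent nonzero matrices,
pairwise "orthogonal" (`P lam * P mu = 0` for `lam ≠ mu`), summing to the
identity, with `∑ lam • P lam = M`. -/
structure IsSpectralDecomp {n : Type*} [Fintype n]
    (M : Matrix n n ℝ) (Λ : Finset ℝ) (P : ℝ → Matrix n n ℝ) : Prop where
  symm : ∀ lam ∈ Λ, (P lam)ᵀ = P lam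
  idem : ∀ lam ∈ Λ, P lam * P lam = P lam
  nonzero : ∀ lam ∈ Λ, P lam ≠ 0
  orth : ∀ lam ∈ Λ, ∀ mu ∈ Λ, lam ≠ mu → P lam * P mu = 0
  sum_one : ∑ lam ∈ Λ, P lam = 1
  sum_smul : ∑ lam ∈ Λ, lam • P lam = M

/-- The eigenspace projection invariant
`𝒫^M(u,v) = {{(lam, P_lam(u,v)) : lam eigenvalue of M}}`. -/
def projInv {n : Type*} (Λ : Finset ℝ) (P : ℝ → Matrix n n ℝ) (u v : n) :
    Multiset (ℝ × ℝ) :=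
  Λ.val.map fun lam => (lam, P lam u v)

/-! ### Subgraph Weisfeiler-Lehman variants (SWL, PSWL) and 3-WL -/

/-- Round-`l` color type for SWL. -/
def SColor : ℕ → Type
  | 0 => ℕ
  | l + 1 => SColor l × Multiset (SColor l × ℕ)

/-- Initial pair color: `1` on the diagonal, `0` off it. -/
def initPairColor {V : Type*} (u v : V) : ℕ := if u = v then 1 else 0

/-- The SWL pair-coloring. -/
def swl {V : Type*} [Fintype V] (G : SimpleGraph V) :
    (l : ℕ) → V → V → SColor l
  | 0 => fun u v => initPairColor u v
  | l + 1 => fun u v =>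
      (swl G l u v, Finset.univ.val.map fun w => (swl G l u w, atp G v w))

/-- SWL indistinguishability. -/
def SWLIndist {V W : Type*} [Fintype V] [Fintype W]
    (G : SimpleGraph V) (H : SimpleGraph W) : Prop :=
  ∀ l : ℕ,
    ((Finset.univ : Finset (V × V)).val.map fun p => swl G l p.1 p.2) =
      ((Finset.univ : Finset (W × W)).val.map fun p => swl H l p.1 p.2)

/-- Round-`l` color type for PSWL. -/
def PSColor : ℕ → Type
  | 0 => ℕ
  | l + 1 => PSColor l × PSColor l × Multiset (PSColor l × ℕ)

/-- The PSWL pair-coloring. -/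
def pswl {V : Type*} [Fintype V] (G : SimpleGraph V) :
    (l : ℕ) → V → V → PSColor l
  | 0 => fun u v => initPairColor u v
  | l + 1 => fun u v =>
      (pswl G l u v, pswl G l v v,
        Finset.univ.val.map fun w => (pswl G l u w, atp G v w))

/-- PSWL indistinguishability. -/
def PSWLIndist {V W : Type*} [Fintype V] [Fintype W]
    (G : SimpleGraph V) (H : SimpleGraph W) : Prop :=
  ∀ l : ℕ,
    ((Finset.univ : Finset (V × V)).val.map fun p => pswl G l p.1 p.2) =
      ((Finset.univ : Finset (W × W)).val.map fun p => pswl H l p.1 p.2)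

/-- Round-`l` color type for 3-WL; the initial color records which of
`u, v, w` coincide and which of the pairs are edges. -/
def W3Color : ℕ → Type
  | 0 => Bool × Bool × Bool × Bool × Bool × Bool
  | l + 1 => W3Color l × Multiset (W3Color l × W3Color l × W3Color l)

/-- The 3-WL triple-coloring. -/
def wl3 {V : Type*} [Fintype V] (G : SimpleGraph V) :
    (l : ℕ) → V → V → V → W3Color l
  | 0 => fun u v w =>
      (decide (u = v), decide (u = w), decide (v = w),
        decide (G.Adj u v), decide (G.Adj u w), decide (G.Adj v w))
  | l + 1 => fun u v w =>
      (wl3 G l u v w,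
        Finset.univ.val.map fun z =>
          (wl3 G l z v w, wl3 G l u z w, wl3 G l u v z))

/-- 3-WL indistinguishability. -/
def WL3Indist {V W : Type*} [Fintype V] [Fintype W]
    (G : SimpleGraph V) (H : SimpleGraph W) : Prop :=
  ∀ l : ℕ,
    ((Finset.univ : Finset (V × V × V)).val.map fun p => wl3 G l p.1 p.2.1 p.2.2) =
      ((Finset.univ : Finset (W × W × W)).val.map fun p => wl3 H l p.1 p.2.1 p.2.2)

/-! ### Distances -/

/-- The shortest-path distance, valued in `ℕ∞`. -/
def spd {V : Type*} (G : SimpleGraph V) (u v : V) : ℕ∞ := G.edist u v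

/-- The four Penrose conditions characterizing the Moore–Penrose
pseudoinverse `X` of `B`. -/
def IsMoorePenrose {n : Type*} [Fintype n] (B X : Matrix n n ℝ) : Prop :=
  B * X * B = B ∧ X * B * X = X ∧ (B * X)ᵀ = B * X ∧ (X * B)ᵀ = X * B

/-- Resistance distance computed from (a Moore–Penrose pseudoinverse of)
the Laplacian: `X(u,u) + X(v,v) - 2X(u,v)` for vertices in the same
connected component, and `∞` otherwise. -/
def rdOf {V : Type*} (G : SimpleGraph V) (X : Matrix V V ℝ) (u v : V) :
    WithTop ℝ :=
  if G.Reachable u v then ((X u u + X v v - 2 * X u v : ℝ) : WithTop ℝ) else ⊤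

/-- Matrix exponential, as the everywhere-convergent power series
`exp B = ∑ Bⁿ/n!`. -/
def matExp {V : Type*} [Fintype V] (B : Matrix V V ℝ) : Matrix V V ℝ :=
  ∑' n : ℕ, ((n.factorial : ℝ))⁻¹ • B ^ n

/-! ### Connectivity notions -/

/-- Number of connected components. -/
def numComponents {V : Type*} (G : SimpleGraph V) : ℕ :=
  Nat.card G.ConnectedComponent

/-- A cut vertex: deleting it (and all incident edges) strictly increases
the number of connected components. -/
def IsCutVertex {V : Type*} (G : SimpleGraph V) (v : V) : Prop :=
  numComponents G < numComponents (G.induce {w : V | w ≠ v})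

/-- A cut edge: it is an edge whose deletion strictly increases the number
of connected components. -/
def IsCutEdge {V : Type*} (G : SimpleGraph V) (e : Sym2 V) : Prop :=
  e ∈ G.edgeSet ∧ numComponents G < numComponents (G.deleteEdges {e})



/-! ### Auxiliary machinery for Statement 10 -/

section Simulation

/-- Forgetting the last round of a color. -/
def down {α : Type} : (l : ℕ) → Color α (l + 1) → Color α l
  | 0, _ => ()
  | l + 1, c => (down l c.1, c.2.map fun q => (down l q.1, q.2))

lemma down_colorFn {V : Type*} [Fintype V] {α : Type} (f : V → V → α) :
    ∀ (l : ℕ) (u : V), down l (colorFn f (l + 1) u) = colorFn f l u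
  | 0, _ => rfl
  | l + 1, u => by
      show (down l (colorFn f (l + 1) u),
          (Finset.univ.val.map fun v => (colorFn f (l + 1) v, f u v)).map
            fun q => (down l q.1, q.2)) = _
      rw [Multiset.map_map, down_colorFn f l]
      show (_, Finset.univ.val.map
        (fun v => (down l (colorFn f (l+1) v), f u v))) = colorFn f (l+1) u
      have : (fun v => (down l (colorFn f (l+1) v), f u v))
          = fun v : V => (colorFn f l v, f u v) := by
        funext v; rw [down_colorFn f l]
      rw [this]; rfl

/-- Truncating a round-`l+1` color to a round-`1` color. -/
def truncC {α : Type} : (l : ℕ) → Color α (l + 1) → Color α 1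
  | 0, c => c
  | l + 1, c => truncC l (down (l + 1) c)

lemma truncC_colorFn {V : Type*} [Fintype V] {α : Type} (f : V → V → α) :
    ∀ (l : ℕ) (u : V), truncC l (colorFn f (l + 1) u) = colorFn f 1 u
  | 0, _ => rfl
  | l + 1, u => by rw [truncC, down_colorFn, truncC_colorFn f l]

/-- Simulating the refinement for a derived feature. -/
def Phi {α β : Type} (F : Color α 1 → Color α 1 → α → β) :
    (l : ℕ) → Color α (l + 1) → Color β l
  | 0, _ => ()
  | l + 1, c =>
      (Phi F l c.1,
        c.2.map fun q => (Phi F l q.1, F (truncC l c.1) (truncC l q.1) q.2))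

lemma Phi_colorFn {V : Type*} [Fintype V] {α β : Type}
    (F : Color α 1 → Color α 1 → α → β) (f : V → V → α) (f' : V → V → β)
    (hf : ∀ u v, f' u v = F (colorFn f 1 u) (colorFn f 1 v) (f u v)) :
    ∀ (l : ℕ) (u : V), Phi F l (colorFn f (l + 1) u) = colorFn f' l u
  | 0, _ => rfl
  | l + 1, u => by
      show (Phi F l (colorFn f (l + 1) u),
          (Finset.univ.val.map fun v => (colorFn f (l + 1) v, f u v)).map
            fun q => (Phi F l q.1,
              F (truncC l (colorFn f (l + 1) u)) (truncC l q.1) q.2)) = _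
      rw [Multiset.map_map, Phi_colorFn F f f' hf l, truncC_colorFn]
      show (_, Finset.univ.val.map (fun v =>
          (Phi F l (colorFn f (l+1) v),
            F (colorFn f 1 u) (truncC l (colorFn f (l+1) v)) (f u v))))
        = colorFn f' (l+1) u
      have : (fun v => (Phi F l (colorFn f (l+1) v),
            F (colorFn f 1 u) (truncC l (colorFn f (l+1) v)) (f u v)))
          = fun v : V => (colorFn f' l v, f' u v) := by
        funext v
        rw [Phi_colorFn F f f' hf l, truncC_colorFn, hf]
      rw [this]; rfl

lemma nodeIndist_lift {V W : Type*} [Fintype V] [Fintype W] {α β : Type}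
    (F : Color α 1 → Color α 1 → α → β)
    {f : V → V → α} {g : W → W → α} {f' : V → V → β} {g' : W → W → β}
    (hf : ∀ u v, f' u v = F (colorFn f 1 u) (colorFn f 1 v) (f u v))
    (hg : ∀ u v, g' u v = F (colorFn g 1 u) (colorFn g 1 v) (g u v))
    (h : NodeIndist f g) : NodeIndist f' g' := by
  intro l
  have h' := congrArg (Multiset.map (Phi F l)) (h (l + 1))
  rw [Multiset.map_map, Multiset.map_map] at h'
  calc Finset.univ.val.map (colorFn f' l)
      = Finset.univ.val.map (Phi F l ∘ colorFn f (l + 1)) :=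
        Multiset.map_congr rfl fun u _ => (Phi_colorFn F f f' hf l u).symm
    _ = Finset.univ.val.map (Phi F l ∘ colorFn g (l + 1)) := h'
    _ = Finset.univ.val.map (colorFn g' l) :=
        Multiset.map_congr rfl fun u _ => Phi_colorFn F g g' hg l u

end Simulation

/-! ### Numeric invariants extracted from the projection feature -/

def sumP (m : Multiset (ℝ × ℝ)) : ℝ := (m.map Prod.snd).sum

def sumLam (m : Multiset (ℝ × ℝ)) : ℝ := (m.map fun p => p.1 * p.2).sum

def sumInv (m : Multiset (ℝ × ℝ)) : ℝ :=
  (m.map fun p => (if p.1 = 0 then 0 else p.1⁻¹) * p.2).sum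

def sumZero (m : Multiset (ℝ × ℝ)) : ℝ :=
  (m.map fun p => if p.1 = 0 then p.2 else 0).sum

def degOf (c : Color (Multiset (ℝ × ℝ)) 1) : ℝ :=
  (c.2.map fun q => if sumLam q.2 ≠ 0 ∧ sumP q.2 = 0 then (1 : ℝ) else 0).sum

def sdiag (c : Color (Multiset (ℝ × ℝ)) 1) : ℝ :=
  (c.2.map fun q => if sumP q.2 = 1 then sumInv q.2 else 0).sum

def Ffun (c d : Color (Multiset (ℝ × ℝ)) 1) (m : Multiset (ℝ × ℝ)) : WithTop ℝ :=
  if sumZero m = 0 then ⊤ else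
    ((sdiag c / degOf c + sdiag d / degOf d
      - 2 * sumInv m / Real.sqrt (degOf c * degOf d) : ℝ) : WithTop ℝ)

/-! ### Moore–Penrose pseudoinverses -/

lemma MP_unique {n : Type*} [Fintype n] {B X Y : Matrix n n ℝ}
    (hX : IsMoorePenrose B X) (hY : IsMoorePenrose B Y) : X = Y := by
  obtain ⟨hX1, hX2, hX3, hX4⟩ := hX
  obtain ⟨hY1, hY2, hY3, hY4⟩ := hY
  have hBtY : Bᵀ = Bᵀ * Yᵀ * Bᵀ := by
    conv_lhs => rw [← hY1]
    simp [Matrix.transpose_mul, Matrix.mul_assoc]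
  have hBtX : Bᵀ = Bᵀ * Xᵀ * Bᵀ := by
    conv_lhs => rw [← hX1]
    simp [Matrix.transpose_mul, Matrix.mul_assoc]
  have h2 : Bᵀ * Xᵀ * X = X := by
    rw [← Matrix.transpose_mul, hX4]; exact hX2
  have e1 : X = Y * B * X := by
    calc X = Bᵀ * Xᵀ * X := h2.symm
      _ = (Bᵀ * Yᵀ * Bᵀ) * Xᵀ * X := by rw [← hBtY]
      _ = Bᵀ * Yᵀ * (Bᵀ * Xᵀ * X) := by simp [Matrix.mul_assoc]
      _ = Bᵀ * Yᵀ * X := by rw [h2]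
      _ = (Y * B)ᵀ * X := by rw [Matrix.transpose_mul]
      _ = Y * B * X := by rw [hY4]
  have e2 : Y = Y * B * X := by
    calc Y = Y * B * Y := hY2.symm
      _ = Y * (B * Y) := by rw [Matrix.mul_assoc]
      _ = Y * (B * Y)ᵀ := by rw [hY3]
      _ = Y * (Yᵀ * Bᵀ) := by rw [Matrix.transpose_mul]
      _ = Y * (Yᵀ * (Bᵀ * Xᵀ * Bᵀ)) := by rw [← hBtX]
      _ = (Y * (Yᵀ * Bᵀ)) * (Xᵀ * Bᵀ) := by simp [Matrix.mul_assoc]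
      _ = (Y * (B * Y)ᵀ) * (B * X)ᵀ := by rw [Matrix.transpose_mul, Matrix.transpose_mul]
      _ = (Y * (B * Y)) * (B * X) := by rw [hY3, hX3]
      _ = (Y * B * Y) * (B * X) := by simp [Matrix.mul_assoc]
      _ = Y * (B * X) := by rw [hY2]
      _ = Y * B * X := by rw [Matrix.mul_assoc]
  rw [e1, ← e2]

lemma MP_transpose {n : Type*} [Fintype n] {B X : Matrix n n ℝ} (hB : Bᵀ = B)
    (hX : IsMoorePenrose B X) : IsMoorePenrose B Xᵀ := by
  obtain ⟨h1, h2, h3, h4⟩ := hX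
  have hBX : B * Xᵀ = X * B := by
    calc B * Xᵀ = Bᵀ * Xᵀ := by rw [hB]
      _ = (X * B)ᵀ := (Matrix.transpose_mul _ _).symm
      _ = X * B := h4
  have hXB : Xᵀ * B = B * X := by
    calc Xᵀ * B = Xᵀ * Bᵀ := by rw [hB]
      _ = (B * X)ᵀ := (Matrix.transpose_mul _ _).symm
      _ = B * X := h3
  refine ⟨?_, ?_, ?_, ?_⟩
  · calc B * Xᵀ * B = Bᵀ * Xᵀ * Bᵀ := by rw [hB]
      _ = (B * X * B)ᵀ := by simp [Matrix.transpose_mul, Matrix.mul_assoc]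
      _ = Bᵀ := by rw [h1]
      _ = B := hB
  · calc Xᵀ * B * Xᵀ = Xᵀ * Bᵀ * Xᵀ := by rw [hB]
      _ = (X * B * X)ᵀ := by simp [Matrix.transpose_mul, Matrix.mul_assoc]
      _ = Xᵀ := by rw [h2]
  · rw [hBX]; exact h4
  · rw [hXB]; exact h3

/-! ### Spectral decompositions -/

section Spectral

variable {n : Type*} [Fintype n] {M : Matrix n n ℝ} {Λ : Finset ℝ}
  {P : ℝ → Matrix n n ℝ}

/-- The projection onto the kernel (the `0`-eigenprojection, or `0`). -/
def P0 (Λ : Finset ℝ) (P : ℝ → Matrix n n ℝ) : Matrix n n ℝ :=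
  if (0 : ℝ) ∈ Λ then P 0 else 0

/-- The "pseudoinverse" built from the spectral decomposition. -/
def Yzero (Λ : Finset ℝ) (P : ℝ → Matrix n n ℝ) : Matrix n n ℝ :=
  ∑ lam ∈ Λ, (if lam = 0 then 0 else lam⁻¹) • P lam

lemma spec_mul (hP : IsSpectralDecomp M Λ P) {lam : ℝ} (hlam : lam ∈ Λ) :
    M * P lam = lam • P lam := by
  calc M * P lam = (∑ mu ∈ Λ, mu • P mu) * P lam := by rw [hP.sum_smul]
    _ = ∑ mu ∈ Λ, mu • (P mu * P lam) := by
        rw [Finset.sum_mul]; exact Finset.sum_congr rfl fun mu _ => smul_mul_assoc mu _ _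
    _ = lam • P lam := by
        rw [Finset.sum_eq_single lam
          (fun mu hmu hne => by rw [hP.orth mu hmu lam hlam hne, smul_zero])
          (fun h => absurd hlam h)]
        rw [hP.idem lam hlam]

lemma mul_spec (hP : IsSpectralDecomp M Λ P) {lam : ℝ} (hlam : lam ∈ Λ) :
    P lam * M = lam • P lam := by
  calc P lam * M = P lam * (∑ mu ∈ Λ, mu • P mu) := by rw [hP.sum_smul]
    _ = ∑ mu ∈ Λ, mu • (P lam * P mu) := by
        rw [Finset.mul_sum]; exact Finset.sum_congr rfl fun mu _ => mul_smul_comm mu _ _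
    _ = lam • P lam := by
        rw [Finset.sum_eq_single lam
          (fun mu hmu hne => by rw [hP.orth lam hlam mu hmu (Ne.symm hne), smul_zero])
          (fun h => absurd hlam h)]
        rw [hP.idem lam hlam]

lemma M_P0 (hP : IsSpectralDecomp M Λ P) : M * P0 Λ P = 0 := by
  unfold P0; split
  · rw [spec_mul hP ‹(0:ℝ) ∈ Λ›, zero_smul]
  · exact Matrix.mul_zero M

lemma P0_M (hP : IsSpectralDecomp M Λ P) : P0 Λ P * M = 0 := by
  unfold P0; split
  · rw [mul_spec hP ‹(0:ℝ) ∈ Λ›, zero_smul]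
  · exact Matrix.zero_mul M

lemma P0_symm (hP : IsSpectralDecomp M Λ P) : (P0 Λ P)ᵀ = P0 Λ P := by
  unfold P0; split
  · exact hP.symm 0 ‹(0:ℝ) ∈ Λ›
  · exact Matrix.transpose_zero

lemma Yzero_symm (hP : IsSpectralDecomp M Λ P) : (Yzero Λ P)ᵀ = Yzero Λ P := by
  unfold Yzero
  rw [Matrix.transpose_sum]
  exact Finset.sum_congr rfl fun lam hlam => by
    rw [Matrix.transpose_smul, hP.symm lam hlam]

lemma M_Yzero (hP : IsSpectralDecomp M Λ P) : M * Yzero Λ P = 1 - P0 Λ P := by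
  unfold Yzero
  rw [Finset.mul_sum]
  have h : ∀ lam ∈ Λ, M * ((if lam = 0 then 0 else lam⁻¹) • P lam)
      = P lam - (if lam = 0 then P lam else 0) := by
    intro lam hlam
    rw [Matrix.mul_smul, spec_mul hP hlam, smul_smul]
    by_cases h : lam = 0
    · simp [h]
    · rw [if_neg h, if_neg h, inv_mul_cancel₀ h, one_smul, sub_zero]
  rw [Finset.sum_congr rfl h, Finset.sum_sub_distrib, hP.sum_one,
    Finset.sum_ite_eq' Λ 0 P]
  unfold P0
  by_cases h : (0:ℝ) ∈ Λ <;> simp [h]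

lemma proj_fix (hP : IsSpectralDecomp M Λ P) {N : Matrix n n ℝ}
    (hN : M * N = 0) : P0 Λ P * N = N := by
  have h1 : ∀ lam ∈ Λ, lam ≠ 0 → P lam * N = 0 := by
    intro lam hlam hne
    have h : lam • (P lam * N) = 0 := by
      calc lam • (P lam * N) = (lam • P lam) * N := (smul_mul_assoc lam _ _).symm
        _ = (P lam * M) * N := by rw [mul_spec hP hlam]
        _ = P lam * (M * N) := Matrix.mul_assoc _ _ _
        _ = 0 := by rw [hN, Matrix.mul_zero]
    exact (smul_eq_zero.mp h).resolve_left hne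
  have h2 : ∑ lam ∈ Λ, P lam * N = P0 Λ P * N := by
    rw [Finset.sum_congr rfl (fun lam hlam =>
      show P lam * N = if lam = 0 then P lam * N else 0 by
        by_cases h : lam = 0
        · rw [if_pos h]
        · rw [if_neg h, h1 lam hlam h]),
      Finset.sum_ite_eq' Λ 0 (fun lam => P lam * N)]
    unfold P0
    by_cases h : (0:ℝ) ∈ Λ
    · simp [h]
    · simp [h]
  rw [← h2, ← Finset.sum_mul, hP.sum_one, Matrix.one_mul]

end Spectral

/-! ### Graph-theoretic lemmas -/

section Graph

variable {V : Type*} [Fintype V]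

lemma lapM_symm (G : SimpleGraph V) : (lapM G)ᵀ = lapM G :=
  (SimpleGraph.isSymm_lapMatrix (R := ℝ) (G := G))

lemma ker_const (G : SimpleGraph V) (x : V → ℝ) (h : lapM G *ᵥ x = 0)
    {i j : V} (hij : G.Reachable i j) : x i = x j := by
  have h2 : Matrix.toLin' (G.lapMatrix ℝ) x = 0 := by
    rw [Matrix.toLin'_apply]; exact h
  exact (SimpleGraph.lapMatrix_mulVec_eq_zero_iff_forall_reachable
    (G := G) (x := x)).mp (by rwa [Matrix.toLin'_apply] at h2) i j hij

lemma lap_row_sum (G : SimpleGraph V) (u : V) : ∑ w, lapM G u w = 0 := by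
  have h := congrFun (SimpleGraph.lapMatrix_mulVec_const_eq_zero (R := ℝ) (G := G)) u
  simp [Matrix.mulVec, dotProduct] at h
  exact h

lemma lapM_apply_ne (G : SimpleGraph V) {u w : V} (h : u ≠ w) :
    lapM G u w = if G.Adj u w then -1 else 0 := by
  simp only [lapM, degM, adjM, Matrix.sub_apply, Matrix.diagonal_apply_ne _ h,
    SimpleGraph.adjMatrix_apply]
  by_cases hadj : G.Adj u w <;> simp [hadj]

/-- The volume (sum of degrees) of the connected component of `u`. -/
def vol (G : SimpleGraph V) (u : V) : ℝ :=
  ∑ w ∈ Finset.univ.filter (fun w => G.Reachable u w), (G.degree w : ℝ)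

lemma vol_pos (G : SimpleGraph V) (hG : ∀ v, 0 < G.degree v) (u : V) :
    0 < vol G u := by
  refine Finset.sum_pos' (fun w _ => Nat.cast_nonneg _) ⟨u, ?_, ?_⟩
  · simp only [Finset.mem_filter, Finset.mem_univ, true_and]
    exact SimpleGraph.Reachable.refl u
  · exact_mod_cast hG u

lemma vol_congr (G : SimpleGraph V) {u v : V} (h : G.Reachable u v) :
    vol G u = vol G v := by
  unfold vol
  congr 1
  ext w
  simp only [Finset.mem_filter, Finset.mem_univ, true_and]
  exact ⟨fun hw => h.symm.trans hw, fun hw => h.trans hw⟩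

/-- The component-averaging matrix. -/
def Rmat (G : SimpleGraph V) : Matrix V V ℝ :=
  Matrix.of fun u v => if G.Reachable u v then (vol G u)⁻¹ else 0

lemma Rmat_symm (G : SimpleGraph V) : (Rmat G)ᵀ = Rmat G := by
  ext u v
  simp only [Matrix.transpose_apply, Rmat, Matrix.of_apply]
  by_cases h : G.Reachable u v
  · rw [if_pos h.symm, if_pos h, vol_congr G h.symm]
  · rw [if_neg (fun hc => h hc.symm), if_neg h]

lemma lap_mul_Rmat (G : SimpleGraph V) : lapM G * Rmat G = 0 := by
  ext u v
  rw [Matrix.mul_apply, Matrix.zero_apply]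
  by_cases hr : G.Reachable u v
  · have h1 : ∀ w : V, lapM G u w * Rmat G w v = lapM G u w * (vol G v)⁻¹ := by
      intro w
      by_cases hw : G.Reachable w v
      · rw [show Rmat G w v = (vol G w)⁻¹ from if_pos hw, vol_congr G hw]
      · have hwu : u ≠ w := fun h => hw (h ▸ hr)
        have hzero : lapM G u w = 0 := by
          rw [lapM_apply_ne G hwu, if_neg]
          intro hadj
          exact hw (hadj.symm.reachable.trans hr)
        rw [hzero, zero_mul, zero_mul]
    rw [Finset.sum_congr rfl (fun w _ => h1 w), ← Finset.sum_mul, lap_row_sum,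
      zero_mul]
  · refine Finset.sum_eq_zero fun w _ => ?_
    by_cases hw : G.Reachable w v
    · have hwu : u ≠ w := fun h => hr (h ▸ hw)
      have : lapM G u w = 0 := by
        rw [lapM_apply_ne G hwu, if_neg]
        intro hadj
        exact hr (hadj.reachable.trans hw)
      rw [this, zero_mul]
    · rw [show Rmat G w v = 0 from if_neg hw, mul_zero]

/-- The diagonal matrix `D^{1/2}`. -/
def Tmat (G : SimpleGraph V) : Matrix V V ℝ :=
  Matrix.diagonal fun v => Real.sqrt (G.degree v)

variable (G : SimpleGraph V)

lemma sqrt_deg_pos (hG : ∀ v, 0 < G.degree v) (v : V) :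
    0 < Real.sqrt (G.degree v) :=
  Real.sqrt_pos.mpr (by exact_mod_cast hG v)

lemma TS_one (hG : ∀ v, 0 < G.degree v) : Tmat G * invSqrtDegM G = 1 := by
  rw [Tmat, invSqrtDegM, Matrix.diagonal_mul_diagonal]
  have h : (fun v : V => Real.sqrt (G.degree v) * (Real.sqrt (G.degree v))⁻¹)
      = fun _ : V => (1:ℝ) :=
    funext fun v => mul_inv_cancel₀ (sqrt_deg_pos G hG v).ne'
  rw [h, Matrix.diagonal_one]

lemma ST_one (hG : ∀ v, 0 < G.degree v) : invSqrtDegM G * Tmat G = 1 := by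
  rw [Tmat, invSqrtDegM, Matrix.diagonal_mul_diagonal]
  have h : (fun v : V => (Real.sqrt (G.degree v))⁻¹ * Real.sqrt (G.degree v))
      = fun _ : V => (1:ℝ) :=
    funext fun v => inv_mul_cancel₀ (sqrt_deg_pos G hG v).ne'
  rw [h, Matrix.diagonal_one]

lemma TT_deg : Tmat G * Tmat G = degM G := by
  rw [Tmat, degM, Matrix.diagonal_mul_diagonal]
  have h : (fun v : V => Real.sqrt (G.degree v) * Real.sqrt (G.degree v))
      = fun v : V => ((G.degree v : ℝ)) :=
    funext fun v => Real.mul_self_sqrt (Nat.cast_nonneg _)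
  rw [h]

lemma TS_cancel (hG : ∀ v, 0 < G.degree v) (A : Matrix V V ℝ) :
    Tmat G * (invSqrtDegM G * A) = A := by
  rw [← Matrix.mul_assoc, TS_one G hG, Matrix.one_mul]

lemma ST_cancel (hG : ∀ v, 0 < G.degree v) (A : Matrix V V ℝ) :
    invSqrtDegM G * (Tmat G * A) = A := by
  rw [← Matrix.mul_assoc, ST_one G hG, Matrix.one_mul]

lemma lap_eq_TMT (hG : ∀ v, 0 < G.degree v) :
    Tmat G * normLapM G * Tmat G = lapM G := by
  simp only [normLapM, Matrix.mul_assoc]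
  rw [ST_one G hG, Matrix.mul_one, TS_cancel G hG]

/-- The projection onto the kernel of the normalized Laplacian, explicitly. -/
def Qmat (G : SimpleGraph V) : Matrix V V ℝ := Tmat G * Rmat G * Tmat G

lemma Qmat_apply (u v : V) :
    Qmat G u v = Real.sqrt (G.degree u)
      * (if G.Reachable u v then (vol G u)⁻¹ else 0) * Real.sqrt (G.degree v) := by
  rw [Qmat, Tmat, Matrix.mul_diagonal, Matrix.diagonal_mul]
  rfl

lemma Qmat_symm : (Qmat G)ᵀ = Qmat G := by
  rw [Qmat, Matrix.transpose_mul, Matrix.transpose_mul, Rmat_symm, Tmat,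
    Matrix.diagonal_transpose, Matrix.mul_assoc]

lemma normLap_mul_Qmat (hG : ∀ v, 0 < G.degree v) : normLapM G * Qmat G = 0 := by
  simp only [normLapM, Qmat, Matrix.mul_assoc]
  rw [ST_cancel G hG, ← Matrix.mul_assoc (lapM G), lap_mul_Rmat, Matrix.zero_mul,
    Matrix.mul_zero]

lemma Qmat_fix (hG : ∀ v, 0 < G.degree v) (N : Matrix V V ℝ)
    (hN : normLapM G * N = 0) : Qmat G * N = N := by
  have hNK : Tmat G * (invSqrtDegM G * N) = N := TS_cancel G hG N
  have hLK : lapM G * (invSqrtDegM G * N) = 0 := by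
    have h : lapM G * (invSqrtDegM G * N) = Tmat G * (normLapM G * N) := by
      simp only [normLapM, Matrix.mul_assoc]
      rw [TS_cancel G hG]
    rw [h, hN, Matrix.mul_zero]
  set K := invSqrtDegM G * N with hK
  have hcol : ∀ (j i i' : V), G.Reachable i i' → K i j = K i' j := by
    intro j i i' hrc
    refine ker_const G (fun w => K w j) ?_ hrc
    funext i0
    have h : (lapM G *ᵥ fun w => K w j) i0 = (lapM G * K) i0 j := rfl
    rw [h, hLK]
    rfl
  have hRDK : Rmat G * (degM G * K) = K := by
    ext i j
    rw [Matrix.mul_apply]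
    have h : ∀ w, Rmat G i w * (degM G * K) w j
        = if G.Reachable i w then (vol G i)⁻¹ * ((G.degree w : ℝ) * K i j) else 0 := by
      intro w
      have hdg : (degM G * K) w j = (G.degree w : ℝ) * K w j := by
        rw [degM, Matrix.diagonal_mul]
      by_cases hw : G.Reachable i w
      · rw [show Rmat G i w = (vol G i)⁻¹ from if_pos hw, hdg,
          hcol j w i hw.symm, if_pos hw]
      · rw [show Rmat G i w = 0 from if_neg hw, zero_mul, if_neg hw]
    rw [Finset.sum_congr rfl (fun w _ => h w), ← Finset.sum_filter,
      ← Finset.mul_sum, ← Finset.sum_mul, ← vol, ← mul_assoc,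
      inv_mul_cancel₀ (vol_pos G hG i).ne', one_mul]
  calc Qmat G * N = Qmat G * (Tmat G * K) := by rw [hNK]
    _ = Tmat G * (Rmat G * (degM G * K)) := by
        simp only [Qmat, Matrix.mul_assoc]
        rw [← Matrix.mul_assoc (Tmat G) (Tmat G) K, TT_deg]
    _ = Tmat G * K := by rw [hRDK]
    _ = N := hNK

lemma P0_eq_Qmat {Λ : Finset ℝ} {P : ℝ → Matrix V V ℝ}
    (hP : IsSpectralDecomp (normLapM G) Λ P) (hG : ∀ v, 0 < G.degree v) :
    P0 Λ P = Qmat G := by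
  have h1 : P0 Λ P * Qmat G = Qmat G := proj_fix hP (normLap_mul_Qmat G hG)
  have h2 : Qmat G * P0 Λ P = P0 Λ P := Qmat_fix G hG _ (M_P0 hP)
  calc P0 Λ P = (P0 Λ P)ᵀ := (P0_symm hP).symm
    _ = (Qmat G * P0 Λ P)ᵀ := by rw [h2]
    _ = (P0 Λ P)ᵀ * (Qmat G)ᵀ := Matrix.transpose_mul _ _
    _ = P0 Λ P * Qmat G := by rw [P0_symm hP, Qmat_symm]
    _ = Qmat G := h1

end Graph

/-! ### Reading off resistance distance from the projection invariant -/

section Extraction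

variable {V : Type*} [Fintype V]

lemma sumP_projInv (Λ : Finset ℝ) (P : ℝ → Matrix V V ℝ) (u v : V) :
    sumP (projInv Λ P u v) = ∑ lam ∈ Λ, P lam u v := by
  rw [sumP, projInv, Multiset.map_map]; rfl

lemma sumLam_projInv (Λ : Finset ℝ) (P : ℝ → Matrix V V ℝ) (u v : V) :
    sumLam (projInv Λ P u v) = ∑ lam ∈ Λ, lam * P lam u v := by
  rw [sumLam, projInv, Multiset.map_map]; rfl

lemma sumInv_projInv (Λ : Finset ℝ) (P : ℝ → Matrix V V ℝ) (u v : V) :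
    sumInv (projInv Λ P u v) = Yzero Λ P u v := by
  rw [Yzero, Matrix.sum_apply]
  have h : ∀ lam ∈ Λ, ((if lam = 0 then 0 else lam⁻¹) • P lam) u v
      = (if lam = 0 then 0 else lam⁻¹) * P lam u v := fun lam _ => rfl
  rw [Finset.sum_congr rfl h]
  rw [sumInv, projInv, Multiset.map_map]; rfl

lemma sumZero_projInv (Λ : Finset ℝ) (P : ℝ → Matrix V V ℝ) (u v : V) :
    sumZero (projInv Λ P u v) = P0 Λ P u v := by
  have h1 : sumZero (projInv Λ P u v)
      = ∑ lam ∈ Λ, (if lam = 0 then P lam u v else 0) := by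
    simp only [sumZero, projInv, Multiset.map_map, Function.comp]
    rfl
  rw [h1, Finset.sum_ite_eq' Λ 0 (fun lam => P lam u v)]
  unfold P0
  by_cases h : (0:ℝ) ∈ Λ <;> simp [h]

lemma sumP_one {Λ : Finset ℝ} {P : ℝ → Matrix V V ℝ} {M : Matrix V V ℝ}
    (hP : IsSpectralDecomp M Λ P) (u v : V) :
    sumP (projInv Λ P u v) = if u = v then 1 else 0 := by
  rw [sumP_projInv, ← Matrix.sum_apply u v Λ (fun lam => P lam), hP.sum_one,
    Matrix.one_apply]

lemma sumLam_M {Λ : Finset ℝ} {P : ℝ → Matrix V V ℝ} {M : Matrix V V ℝ}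
    (hP : IsSpectralDecomp M Λ P) (u v : V) :
    sumLam (projInv Λ P u v) = M u v := by
  rw [sumLam_projInv, ← hP.sum_smul, Matrix.sum_apply]
  exact Finset.sum_congr rfl fun lam _ => rfl

lemma colorFn_one_snd {α : Type} (f : V → V → α) (u : V) :
    (colorFn f 1 u).2 = Finset.univ.val.map fun v => (((), f u v) : Color α 0 × α) :=
  rfl

lemma degOf_colorFn (f : V → V → Multiset (ℝ × ℝ)) (u : V) :
    degOf (colorFn f 1 u)
      = ∑ v : V, (if sumLam (f u v) ≠ 0 ∧ sumP (f u v) = 0 then (1:ℝ) else 0) := by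
  rw [degOf, colorFn_one_snd, Multiset.map_map]
  rfl

lemma sdiag_colorFn (f : V → V → Multiset (ℝ × ℝ)) (u : V) :
    sdiag (colorFn f 1 u)
      = ∑ v : V, (if sumP (f u v) = 1 then sumInv (f u v) else 0) := by
  rw [sdiag, colorFn_one_snd, Multiset.map_map]
  rfl

lemma normLapM_apply (G : SimpleGraph V) (u v : V) :
    normLapM G u v = (Real.sqrt (G.degree u))⁻¹ * lapM G u v
      * (Real.sqrt (G.degree v))⁻¹ := by
  rw [normLapM, invSqrtDegM, Matrix.mul_diagonal, Matrix.diagonal_mul]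

lemma normLapM_ne_iff (G : SimpleGraph V) (hG : ∀ v, 0 < G.degree v) {u v : V}
    (huv : u ≠ v) : normLapM G u v ≠ 0 ↔ G.Adj u v := by
  rw [normLapM_apply, lapM_apply_ne G huv]
  have hu := (sqrt_deg_pos G hG u).ne'
  have hv := (sqrt_deg_pos G hG v).ne'
  constructor
  · intro h
    by_contra hadj
    rw [if_neg hadj] at h
    simp at h
  · intro hadj
    rw [if_pos hadj]
    intro h
    rcases mul_eq_zero.mp h with h' | h'
    · rcases mul_eq_zero.mp h' with h'' | h''
      · exact inv_ne_zero hu h''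
      · norm_num at h''
    · exact inv_ne_zero hv h'

lemma degOf_eq (G : SimpleGraph V) (hG : ∀ v, 0 < G.degree v)
    {Λ : Finset ℝ} {P : ℝ → Matrix V V ℝ}
    (hP : IsSpectralDecomp (normLapM G) Λ P) (u : V) :
    degOf (colorFn (projInv Λ P) 1 u) = (G.degree u : ℝ) := by
  rw [degOf_colorFn]
  have h : ∀ v : V,
      (if sumLam (projInv Λ P u v) ≠ 0 ∧ sumP (projInv Λ P u v) = 0
        then (1:ℝ) else 0)
      = if G.Adj u v then (1:ℝ) else 0 := by
    intro v
    congr 1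
    rw [eq_iff_iff]
    rw [sumLam_M hP, sumP_one hP]
    constructor
    · rintro ⟨h1, h2⟩
      have huv : u ≠ v := by
        intro h
        rw [if_pos h] at h2
        norm_num at h2
      exact (normLapM_ne_iff G hG huv).mp h1
    · intro hadj
      have huv : u ≠ v := G.ne_of_adj hadj
      exact ⟨(normLapM_ne_iff G hG huv).mpr hadj, if_neg huv⟩
  rw [Finset.sum_congr rfl fun v _ => h v, Finset.sum_boole]
  congr 1
  have h2 : Finset.univ.filter (fun v => G.Adj u v) = G.neighborFinset u := by
    ext w
    simp [SimpleGraph.mem_neighborFinset]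
  rw [h2]
  rfl

lemma sdiag_eq (G : SimpleGraph V) {Λ : Finset ℝ} {P : ℝ → Matrix V V ℝ}
    (hP : IsSpectralDecomp (normLapM G) Λ P) (u : V) :
    sdiag (colorFn (projInv Λ P) 1 u) = Yzero Λ P u u := by
  rw [sdiag_colorFn]
  have h : ∀ v : V,
      (if sumP (projInv Λ P u v) = 1 then sumInv (projInv Λ P u v) else 0)
      = if v = u then sumInv (projInv Λ P u v) else 0 := by
    intro v
    by_cases hv : v = u
    · rw [if_pos hv, if_pos (by rw [sumP_one hP, if_pos hv.symm])]
    · rw [if_neg hv, if_neg (by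
        rw [sumP_one hP, if_neg (fun h => hv h.symm)]
        norm_num)]
  rw [Finset.sum_congr rfl fun v _ => h v,
    Finset.sum_ite_eq' Finset.univ u (fun v => sumInv (projInv Λ P u v)),
    if_pos (Finset.mem_univ u), sumInv_projInv]

end Extraction

/-! ### The quadratic-form argument -/

section Quad

variable {V : Type*} [Fintype V]

lemma vecMul_symm (A : Matrix V V ℝ) (hA : Aᵀ = A) (x : V → ℝ) :
    x ᵥ* A = A *ᵥ x := by
  conv_lhs => rw [← hA]
  rw [Matrix.vecMul_transpose]

lemma symm_mulVec_dot (A : Matrix V V ℝ) (hA : Aᵀ = A) (x y : V → ℝ) :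
    (A *ᵥ x) ⬝ᵥ y = x ⬝ᵥ (A *ᵥ y) := by
  conv_lhs => rw [← Matrix.vecMul_transpose]
  rw [← Matrix.dotProduct_mulVec, hA]

lemma quad_form (G : SimpleGraph V) (X Z : Matrix V V ℝ)
    (hZ : lapM G * Z * lapM G = lapM G) (w : V → ℝ)
    (hEw : lapM G *ᵥ (X *ᵥ w) = w) :
    w ⬝ᵥ (Z *ᵥ w) = (X *ᵥ w) ⬝ᵥ (lapM G *ᵥ (X *ᵥ w)) := by
  set a := X *ᵥ w with ha
  calc w ⬝ᵥ (Z *ᵥ w)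
      = (lapM G *ᵥ a) ⬝ᵥ (Z *ᵥ (lapM G *ᵥ a)) := by rw [hEw]
    _ = a ⬝ᵥ (lapM G *ᵥ (Z *ᵥ (lapM G *ᵥ a))) :=
        symm_mulVec_dot (lapM G) (lapM_symm G) a _
    _ = a ⬝ᵥ ((lapM G * Z * lapM G) *ᵥ a) := by
        rw [Matrix.mulVec_mulVec, Matrix.mulVec_mulVec, Matrix.mul_assoc]
    _ = a ⬝ᵥ (lapM G *ᵥ a) := by rw [hZ]

lemma dot_single_pair (Z : Matrix V V ℝ) (u v : V) :
    (Pi.single u 1 - Pi.single v 1) ⬝ᵥ (Z *ᵥ (Pi.single u 1 - Pi.single v 1))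
      = Z u u - Z u v - Z v u + Z v v := by
  rw [Matrix.mulVec_sub, Matrix.mulVec_single_one, Matrix.mulVec_single_one,
    sub_dotProduct, single_dotProduct, single_dotProduct]
  simp only [Pi.sub_apply, Matrix.col_apply]
  ring

lemma alg_ident (a b du dv Auu Avv Auv : ℝ) (ha : a ≠ 0) (hb : b ≠ 0)
    (hdu : a * a = du) (hdv : b * b = dv) :
    a⁻¹ * Auu * a⁻¹ + b⁻¹ * Avv * b⁻¹ - 2 * (a⁻¹ * Auv * b⁻¹)
    = Auu / du + Avv / dv - 2 * Auv / (a * b) := by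
  subst hdu hdv
  field_simp

end Quad

/-! ### The key pointwise identity -/

lemma rd_eq {V : Type*} [Fintype V] (G : SimpleGraph V) (hG : ∀ v, 0 < G.degree v)
    {Λ : Finset ℝ} {P : ℝ → Matrix V V ℝ}
    (hP : IsSpectralDecomp (normLapM G) Λ P)
    (X : Matrix V V ℝ) (hX : IsMoorePenrose (lapM G) X) (u v : V) :
    rdOf G X u v
      = Ffun (colorFn (projInv Λ P) 1 u) (colorFn (projInv Λ P) 1 v)
        (projInv Λ P u v) := by
  have hsz : sumZero (projInv Λ P u v) = Qmat G u v := by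
    rw [sumZero_projInv, P0_eq_Qmat G hP hG]
  by_cases hr : G.Reachable u v
  · -- reachable: both sides are the finite value
    have hQpos : 0 < Qmat G u v := by
      rw [Qmat_apply, if_pos hr]
      exact mul_pos (mul_pos (sqrt_deg_pos G hG u)
        (inv_pos.mpr (vol_pos G hG u))) (sqrt_deg_pos G hG v)
    rw [rdOf, if_pos hr, Ffun, if_neg (by rw [hsz]; exact hQpos.ne')]
    congr 1
    rw [degOf_eq G hG hP u, degOf_eq G hG hP v, sdiag_eq G hP u, sdiag_eq G hP v,
      sumInv_projInv]
    -- set up the generalized-inverse comparison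
    have hXs : Xᵀ = X := MP_unique (MP_transpose (lapM_symm G) hX) hX
    have hSs : (invSqrtDegM G)ᵀ = invSqrtDegM G := by
      rw [invSqrtDegM]; exact Matrix.diagonal_transpose _
    have hYms : (invSqrtDegM G * Yzero Λ P * invSqrtDegM G)ᵀ
        = invSqrtDegM G * Yzero Λ P * invSqrtDegM G := by
      rw [Matrix.transpose_mul, Matrix.transpose_mul, hSs, Yzero_symm hP,
        Matrix.mul_assoc]
    have hMYM : normLapM G * Yzero Λ P * normLapM G = normLapM G := by
      rw [M_Yzero hP, Matrix.sub_mul, Matrix.one_mul, P0_M hP, sub_zero]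
    have hLYmL : lapM G * (invSqrtDegM G * Yzero Λ P * invSqrtDegM G) * lapM G
        = lapM G := by
      calc lapM G * (invSqrtDegM G * Yzero Λ P * invSqrtDegM G) * lapM G
          = (Tmat G * normLapM G * Tmat G)
              * (invSqrtDegM G * Yzero Λ P * invSqrtDegM G)
              * (Tmat G * normLapM G * Tmat G) := by rw [lap_eq_TMT G hG]
        _ = Tmat G * (normLapM G * Yzero Λ P * normLapM G) * Tmat G := by
            simp only [Matrix.mul_assoc]
            rw [TS_cancel G hG, ST_cancel G hG]
        _ = Tmat G * normLapM G * Tmat G := by rw [hMYM]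
        _ = lapM G := lap_eq_TMT G hG
    -- the vector w0 = e_u - e_v lies in the range of the Laplacian
    have hE2 : ((1 : Matrix V V ℝ) - lapM G * X) * ((1 : Matrix V V ℝ) - lapM G * X)
        = (1 : Matrix V V ℝ) - lapM G * X := by
      have h : lapM G * X * (lapM G * X) = lapM G * X := by
        rw [← Matrix.mul_assoc, hX.1]
      rw [Matrix.sub_mul, Matrix.one_mul, Matrix.mul_sub, Matrix.mul_one, h]
      abel
    have hEsymm : ((1 : Matrix V V ℝ) - lapM G * X)ᵀ
        = (1 : Matrix V V ℝ) - lapM G * X := by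
      rw [Matrix.transpose_sub, Matrix.transpose_one, hX.2.2.1]
    have hEL : ((1 : Matrix V V ℝ) - lapM G * X) * lapM G = 0 := by
      rw [Matrix.sub_mul, Matrix.one_mul, hX.1, sub_self]
    have hLE : lapM G * ((1 : Matrix V V ℝ) - lapM G * X) = 0 := by
      have h := congrArg Matrix.transpose hEL
      rwa [Matrix.transpose_mul, hEsymm, lapM_symm G, Matrix.transpose_zero] at h
    have hLz : lapM G *ᵥ (((1 : Matrix V V ℝ) - lapM G * X)
        *ᵥ (Pi.single u 1 - Pi.single v 1)) = 0 := by
      rw [Matrix.mulVec_mulVec, hLE, Matrix.zero_mulVec]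
    have hzc := ker_const G _ hLz hr
    have hwz : (Pi.single u 1 - Pi.single v 1) ⬝ᵥ
        (((1 : Matrix V V ℝ) - lapM G * X) *ᵥ (Pi.single u 1 - Pi.single v 1))
        = 0 := by
      rw [sub_dotProduct, single_dotProduct, single_dotProduct,
        one_mul, one_mul, hzc, sub_self]
    have hvm := vecMul_symm _ hEsymm
      (((1 : Matrix V V ℝ) - lapM G * X) *ᵥ (Pi.single u 1 - Pi.single v 1))
    have hzz : (((1 : Matrix V V ℝ) - lapM G * X) *ᵥ (Pi.single u 1 - Pi.single v 1))
        ⬝ᵥ (((1 : Matrix V V ℝ) - lapM G * X) *ᵥ (Pi.single u 1 - Pi.single v 1))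
        = 0 := by
      calc (((1 : Matrix V V ℝ) - lapM G * X) *ᵥ (Pi.single u 1 - Pi.single v 1))
          ⬝ᵥ (((1 : Matrix V V ℝ) - lapM G * X) *ᵥ (Pi.single u 1 - Pi.single v 1))
          = ((((1 : Matrix V V ℝ) - lapM G * X) *ᵥ (Pi.single u 1 - Pi.single v 1))
              ᵥ* ((1 : Matrix V V ℝ) - lapM G * X)) ⬝ᵥ (Pi.single u 1 - Pi.single v 1) :=
            Matrix.dotProduct_mulVec _ _ _
        _ = (((1 : Matrix V V ℝ) - lapM G * X) *ᵥ (((1 : Matrix V V ℝ) - lapM G * X)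
              *ᵥ (Pi.single u 1 - Pi.single v 1))) ⬝ᵥ (Pi.single u 1 - Pi.single v 1) := by
            rw [hvm]
        _ = ((((1 : Matrix V V ℝ) - lapM G * X) * ((1 : Matrix V V ℝ) - lapM G * X))
              *ᵥ (Pi.single u 1 - Pi.single v 1)) ⬝ᵥ (Pi.single u 1 - Pi.single v 1) := by
            rw [Matrix.mulVec_mulVec]
        _ = (((1 : Matrix V V ℝ) - lapM G * X) *ᵥ (Pi.single u 1 - Pi.single v 1))
              ⬝ᵥ (Pi.single u 1 - Pi.single v 1) := by rw [hE2]
        _ = (Pi.single u 1 - Pi.single v 1) ⬝ᵥ (((1 : Matrix V V ℝ) - lapM G * X)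
              *ᵥ (Pi.single u 1 - Pi.single v 1)) := dotProduct_comm _ _
        _ = 0 := hwz
    have hz0 : ((1 : Matrix V V ℝ) - lapM G * X) *ᵥ (Pi.single u 1 - Pi.single v 1)
        = 0 := dotProduct_self_eq_zero.mp hzz
    have hEw : lapM G *ᵥ (X *ᵥ (Pi.single u 1 - Pi.single v 1))
        = Pi.single u 1 - Pi.single v 1 := by
      rw [Matrix.mulVec_mulVec]
      rw [Matrix.sub_mulVec, Matrix.one_mulVec, sub_eq_zero] at hz0
      exact hz0.symm
    -- compare the two quadratic forms
    have hqX := quad_form G X X hX.1 (Pi.single u 1 - Pi.single v 1) hEw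
    have hqY := quad_form G X (invSqrtDegM G * Yzero Λ P * invSqrtDegM G) hLYmL
      (Pi.single u 1 - Pi.single v 1) hEw
    have h := hqX.trans hqY.symm
    rw [dot_single_pair, dot_single_pair] at h
    have hXa : X v u = X u v := by
      have : Xᵀ u v = X u v := by rw [hXs]
      exact this
    have hYa : (invSqrtDegM G * Yzero Λ P * invSqrtDegM G) v u
        = (invSqrtDegM G * Yzero Λ P * invSqrtDegM G) u v := by
      have : (invSqrtDegM G * Yzero Λ P * invSqrtDegM G)ᵀ u v
          = (invSqrtDegM G * Yzero Λ P * invSqrtDegM G) u v := by rw [hYms]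
      exact this
    have hkey : X u u + X v v - 2 * X u v
        = (invSqrtDegM G * Yzero Λ P * invSqrtDegM G) u u
          + (invSqrtDegM G * Yzero Λ P * invSqrtDegM G) v v
          - 2 * (invSqrtDegM G * Yzero Λ P * invSqrtDegM G) u v := by
      rw [hXa] at h
      rw [hYa] at h
      linarith
    have hYm_app : ∀ a b : V, (invSqrtDegM G * Yzero Λ P * invSqrtDegM G) a b
        = (Real.sqrt (G.degree a))⁻¹ * Yzero Λ P a b * (Real.sqrt (G.degree b))⁻¹ := by
      intro a b
      rw [invSqrtDegM, Matrix.mul_diagonal, Matrix.diagonal_mul]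
    rw [hkey, hYm_app, hYm_app, hYm_app, Real.sqrt_mul (Nat.cast_nonneg _)]
    exact alg_ident _ _ _ _ _ _ _ (sqrt_deg_pos G hG u).ne' (sqrt_deg_pos G hG v).ne'
      (Real.mul_self_sqrt (Nat.cast_nonneg _)) (Real.mul_self_sqrt (Nat.cast_nonneg _))
  · -- unreachable: both sides are ⊤
    have hQ0 : Qmat G u v = 0 := by
      rw [Qmat_apply, if_neg hr, mul_zero, zero_mul]
    rw [rdOf, if_neg hr, Ffun, if_pos (by rw [hsz, hQ0])]

/-- If `G` and `H` are EPWL-indistinguishable with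
respect to the normalized Laplacian, then they are
GD-WL-indistinguishable with respect to the resistance distance. -/
theorem epwl_bounds_gdwl_rd {V W : Type*} [Fintype V] [Fintype W]
    (G : SimpleGraph V) (H : SimpleGraph W)
    (hG : ∀ v, 0 < G.degree v) (hH : ∀ w, 0 < H.degree w)
    (ΛG : Finset ℝ) (PG : ℝ → Matrix V V ℝ)
    (hPG : IsSpectralDecomp (normLapM G) ΛG PG)
    (ΛH : Finset ℝ) (PH : ℝ → Matrix W W ℝ)
    (hPH : IsSpectralDecomp (normLapM H) ΛH PH)
    (XG : Matrix V V ℝ) (hXG : IsMoorePenrose (lapM G) XG)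
    (XH : Matrix W W ℝ) (hXH : IsMoorePenrose (lapM H) XH)
    (hEP : NodeIndist (projInv ΛG PG) (projInv ΛH PH)) :
    NodeIndist (rdOf G XG) (rdOf H XH) :=
  nodeIndist_lift Ffun
    (fun u v => rd_eq G hG hPG XG hXG u v)
    (fun u v => rd_eq H hH hPH XH hXH u v)
    hEP

end EPWL
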